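/- The product of the Cole–Hopf variables solves the Fokker–Planck equation. Let ν > 0 and let d be a positive integer. Let φ, ψ, γ : ℝ × ℝ^d → ℝ and h : ℝ × ℝ^d → ℝ^d, and suppose that at a point (t,x): φ(·,x) and ψ(·,x) are differentiable at t; φ(t,·), ψ(t,·) are twice differentiable in a neighborhood of x with gradients differentiable at x; h(t,·) is differentiable at x; φ > 0 in a neighborhood of (t,x); and the two equations ∂_t φ + νΔφ + h·∇φ = (γ/(2ν))·φ and ∂_t ψ − νΔψ + div(hψ) = −(γ/(2ν))·ψ hold at (t,x), where Δ, ∇, div denote the spatial Laplacian, gradient and divergence. Define m = φψ and u = −2ν log φ. Then ∂_t m(t,x) − νΔm(t,x) − div( m·(∇u − h) )(t,x) = 0; that is, m solves the Fokker–Planck equation ∂_t m − νΔm − div(m·∇_pH(t,x,∇u)) = 0 for the Hamiltonian H(t,x,p) = |p|²/2 − h(t,x)·p, for which ∇_pH(t,x,p) = p − h(t,x). -/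

import Mathlib

open Finset

/-- The product of the Cole–Hopf variables solves the Fokker–Planck equation.
If `∂_t φ + νΔφ + h·∇φ = (γ/(2ν))φ` and `∂_t ψ − νΔψ + div(hψ) = −(γ/(2ν))ψ` at `(t,x)`,
with `φ > 0` near `x`, then `m = φψ` satisfies
`∂_t m − νΔm − div(m·(∇u − h)) = 0` at `(t,x)`, where `u = −2ν log φ`
(so that `∇u = −2ν ∇φ/φ` and `∇_pH(t,x,∇u) = ∇u − h` for `H(t,x,p) = |p|²/2 − h·p`);
in particular all derivatives appearing in the equation exist. -/
theorem cole_hopf_product_solves_fokker_planck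
    (ν : ℝ) (hν : 0 < ν) (d : ℕ) (hd : 0 < d)
    (φ ψ γ : ℝ → (Fin d → ℝ) → ℝ) (h : ℝ → (Fin d → ℝ) → Fin d → ℝ)
    (t : ℝ) (x : Fin d → ℝ)
    (U : Set (Fin d → ℝ)) (hU : U ∈ nhds x)
    (φt ψt : ℝ) (φx ψx : Fin d → (Fin d → ℝ) → ℝ) (φxx ψxx hdiag : Fin d → ℝ)
    -- φ(·,x), ψ(·,x) are differentiable at t
    (hφt : HasDerivAt (fun s => φ s x) φt t)
    (hψt : HasDerivAt (fun s => ψ s x) ψt t)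
    -- spatial partial derivatives of φ(t,·), ψ(t,·) exist on a neighborhood of x
    (hφx : ∀ y ∈ U, ∀ ℓ, HasDerivAt (fun r => φ t (Function.update y ℓ r)) (φx ℓ y) (y ℓ))
    (hψx : ∀ y ∈ U, ∀ ℓ, HasDerivAt (fun r => ψ t (Function.update y ℓ r)) (ψx ℓ y) (y ℓ))
    -- (diagonal) second spatial partial derivatives of φ(t,·), ψ(t,·) exist at x
    (hφxx : ∀ ℓ, HasDerivAt (fun r => φx ℓ (Function.update x ℓ r)) (φxx ℓ) (x ℓ))
    (hψxx : ∀ ℓ, HasDerivAt (fun r => ψx ℓ (Function.update x ℓ r)) (ψxx ℓ) (x ℓ))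
    -- h(t,·) is differentiable at x (diagonal partial derivatives)
    (hhx : ∀ ℓ, HasDerivAt (fun r => h t (Function.update x ℓ r) ℓ) (hdiag ℓ) (x ℓ))
    -- φ is positive near x
    (hφpos : ∀ y ∈ U, 0 < φ t y)
    -- ∂_t φ + νΔφ + h·∇φ = (γ/(2ν))·φ at (t,x)
    (hφeq : φt + ν * (∑ ℓ, φxx ℓ) + (∑ ℓ, h t x ℓ * φx ℓ x)
      = γ t x / (2 * ν) * φ t x)
    -- ∂_t ψ − νΔψ + div(hψ) = −(γ/(2ν))·ψ at (t,x)
    (hψeq : ψt - ν * (∑ ℓ, ψxx ℓ) + (∑ ℓ, (hdiag ℓ * ψ t x + h t x ℓ * ψx ℓ x))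
      = -(γ t x / (2 * ν)) * ψ t x) :
    ∃ (mt : ℝ) (mx : Fin d → (Fin d → ℝ) → ℝ) (mxx wdiag : Fin d → ℝ),
      -- ∂_t m exists at (t,x)
      HasDerivAt (fun s => φ s x * ψ s x) mt t ∧
      -- spatial partial derivatives of m = φψ exist near x
      (∀ y ∈ U, ∀ ℓ, HasDerivAt
        (fun r => φ t (Function.update y ℓ r) * ψ t (Function.update y ℓ r))
        (mx ℓ y) (y ℓ)) ∧
      -- diagonal second spatial partial derivatives of m exist at x
      (∀ ℓ, HasDerivAt (fun r => mx ℓ (Function.update x ℓ r)) (mxx ℓ) (x ℓ)) ∧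
      -- the divergence of w = m·(∇u − h), with ∇u = −2ν∇φ/φ, exists at x
      (∀ ℓ, HasDerivAt
        (fun r =>
          φ t (Function.update x ℓ r) * ψ t (Function.update x ℓ r) *
            (-(2 * ν) * φx ℓ (Function.update x ℓ r) / φ t (Function.update x ℓ r)
              - h t (Function.update x ℓ r) ℓ))
        (wdiag ℓ) (x ℓ)) ∧
      -- the Fokker–Planck equation ∂_t m − νΔm − div(m(∇u − h)) = 0 at (t,x)
      mt - ν * (∑ ℓ, mxx ℓ) - (∑ ℓ, wdiag ℓ) = 0 := by
  have hxU : x ∈ U := mem_of_mem_nhds hU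
  refine ⟨φt * ψ t x + φ t x * ψt,
    fun ℓ y => φx ℓ y * ψ t y + φ t y * ψx ℓ y,
    fun ℓ => φxx ℓ * ψ t x + φx ℓ x * ψx ℓ x + (φx ℓ x * ψx ℓ x + φ t x * ψxx ℓ),
    fun ℓ => -(2 * ν) * (φxx ℓ * ψ t x + φx ℓ x * ψx ℓ x)
      - (φx ℓ x * ψ t x * h t x ℓ + φ t x * ψx ℓ x * h t x ℓ
        + φ t x * ψ t x * hdiag ℓ),
    hφt.mul hψt, ?_, ?_, ?_, ?_⟩
  · intro y hy ℓ
    have := (hφx y hy ℓ).mul (hψx y hy ℓ)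
    simp only [Function.update_eq_self] at this
    exact this
  · intro ℓ
    have := ((hφxx ℓ).mul (hψx x hxU ℓ)).add ((hφx x hxU ℓ).mul (hψxx ℓ))
    simp only [Function.update_eq_self] at this
    exact this
  · intro ℓ
    have hV : {r | Function.update x ℓ r ∈ U} ∈ nhds (x ℓ) := by
      have hc : Continuous fun r : ℝ => Function.update x ℓ r :=
        continuous_const.update ℓ continuous_id
      have := hc.continuousAt (x := x ℓ)
      rw [ContinuousAt, Function.update_eq_self] at this
      exact this hU
    have hf : HasDerivAt
        (fun r => -(2 * ν) * φx ℓ (Function.update x ℓ r) * ψ t (Function.update x ℓ r)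
          - φ t (Function.update x ℓ r) * ψ t (Function.update x ℓ r)
            * h t (Function.update x ℓ r) ℓ)
        (-(2 * ν) * (φxx ℓ * ψ t x + φx ℓ x * ψx ℓ x)
          - (φx ℓ x * ψ t x * h t x ℓ + φ t x * ψx ℓ x * h t x ℓ
            + φ t x * ψ t x * hdiag ℓ)) (x ℓ) := by
      have h1 := (((hφxx ℓ).const_mul (-(2 * ν))).mul (hψx x hxU ℓ)).sub
        (((hφx x hxU ℓ).mul (hψx x hxU ℓ)).mul (hhx ℓ))
      simp only [Function.update_eq_self] at h1
      refine h1.congr_deriv ?_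
      simp only [Pi.mul_apply, Function.update_eq_self]
      ring
    refine hf.congr_of_eventuallyEq ?_
    filter_upwards [hV] with r hr
    have hpos := hφpos _ hr
    field_simp
  · have e1 : (∑ ℓ, (φxx ℓ * ψ t x + φx ℓ x * ψx ℓ x + (φx ℓ x * ψx ℓ x + φ t x * ψxx ℓ)))
        = (∑ ℓ, φxx ℓ) * ψ t x + (∑ ℓ, φx ℓ x * ψx ℓ x)
          + ((∑ ℓ, φx ℓ x * ψx ℓ x) + φ t x * (∑ ℓ, ψxx ℓ)) := by
      simp [Finset.sum_add_distrib, Finset.sum_mul, Finset.mul_sum]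
    have e2 : (∑ ℓ, (-(2 * ν) * (φxx ℓ * ψ t x + φx ℓ x * ψx ℓ x)
        - (φx ℓ x * ψ t x * h t x ℓ + φ t x * ψx ℓ x * h t x ℓ
          + φ t x * ψ t x * hdiag ℓ)))
        = -(2 * ν) * ((∑ ℓ, φxx ℓ) * ψ t x + (∑ ℓ, φx ℓ x * ψx ℓ x))
          - ((∑ ℓ, h t x ℓ * φx ℓ x) * ψ t x + φ t x * (∑ ℓ, h t x ℓ * ψx ℓ x)
            + φ t x * ψ t x * (∑ ℓ, hdiag ℓ)) := by
      have : ∀ ℓ : Fin d, (-(2 * ν) * (φxx ℓ * ψ t x + φx ℓ x * ψx ℓ x)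
          - (φx ℓ x * ψ t x * h t x ℓ + φ t x * ψx ℓ x * h t x ℓ
            + φ t x * ψ t x * hdiag ℓ))
          = (-(2 * ν)) * (φxx ℓ * ψ t x) + (-(2 * ν)) * (φx ℓ x * ψx ℓ x)
            - (h t x ℓ * φx ℓ x) * ψ t x - φ t x * (h t x ℓ * ψx ℓ x)
            - (φ t x * ψ t x) * hdiag ℓ := fun ℓ => by ring
      rw [Finset.sum_congr rfl fun ℓ _ => this ℓ]
      simp only [Finset.sum_sub_distrib, Finset.sum_add_distrib, ← Finset.mul_sum,
        ← Finset.sum_mul]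
      ring
    have e3 : (∑ ℓ, (hdiag ℓ * ψ t x + h t x ℓ * ψx ℓ x))
        = (∑ ℓ, hdiag ℓ) * ψ t x + (∑ ℓ, h t x ℓ * ψx ℓ x) := by
      simp [Finset.sum_add_distrib, Finset.sum_mul]
    rw [e1, e2]
    rw [e3] at hψeq
    linear_combination ψ t x * hφeq + φ t x * hψeq
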